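/- For 1 ≤ p ≤ ∞: if h and its second derivative h'' both belong to L^p(ℝ), then h' ∈ L^p(ℝ). More generally, if h, h^{(k)} ∈ L^p(ℝ;dx), then h^{(ℓ)} ∈ L^p(ℝ;dx) for all ℓ = 1, …, k-1. -/

import Mathlib

open MeasureTheory
open scoped ENNReal NNReal


noncomputable def fdiff : ℕ → (ℝ → ℂ) → (ℝ → ℂ)
  | 0, f => f
  | (m+1), f => fdiff m (fun y => f (y + 1) - f y)

example {p : ENNReal} {f : ℝ → ℂ} (hf : MemLp f p volume) (c : ℝ) :
    MemLp (fun x => f (x + c)) p volume :=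
  hf.comp_measurePreserving (measurePreserving_add_right volume c)

lemma memLp_fdiff {p : ENNReal} : ∀ (m : ℕ) (f : ℝ → ℂ), MemLp f p volume →
    MemLp (fdiff m f) p volume
  | 0, f, hf => hf
  | (m+1), f, hf => memLp_fdiff m _
      ((hf.comp_measurePreserving (measurePreserving_add_right volume 1)).sub hf)

lemma continuous_fdiff : ∀ (m : ℕ) (f : ℝ → ℂ), Continuous f → Continuous (fdiff m f)
  | 0, _, hf => hf
  | (m+1), f, hf => continuous_fdiff m _ ((hf.comp (continuous_id.add continuous_const)).sub hf)

lemma my_iteratedDeriv_sub {n : ℕ} {f g : ℝ → ℂ} (hf : ContDiff ℝ (n : ℕ∞) f)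
    (hg : ContDiff ℝ (n : ℕ∞) g) :
    iteratedDeriv n (fun x => f x - g x) = fun x => iteratedDeriv n f x - iteratedDeriv n g x := by
  funext x
  simp_rw [← iteratedDerivWithin_univ]
  exact iteratedDerivWithin_sub (Set.mem_univ x) uniqueDiffOn_univ
    (hf.contDiffWithinAt (s := Set.univ) (x := x)) (hg.contDiffWithinAt (s := Set.univ) (x := x))



lemma key_ftc {m : ℕ} {f : ℝ → ℂ} (hf : ContDiff ℝ ((m + 1 : ℕ) : ℕ∞) f) (y t : ℝ) :
    iteratedDeriv m f (y + t) - iteratedDeriv m f y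
      = ∫ s in (0:ℝ)..t, iteratedDeriv (m + 1) f (y + s) := by
  rw [intervalIntegral.integral_comp_add_left (fun v => iteratedDeriv (m+1) f v) y]
  rw [add_zero]
  refine (intervalIntegral.integral_eq_sub_of_hasDerivAt (fun x _ => ?_) ?_).symm
  · rw [iteratedDeriv_succ]
    exact ((hf.differentiable_iteratedDeriv m (by exact_mod_cast Nat.lt_succ_self m)) x).hasDerivAt
  · exact (hf.continuous_iteratedDeriv (m+1) (by exact_mod_cast le_rfl)).intervalIntegrable _ _

lemma shift_contDiff {n : ℕ∞} {f : ℝ → ℂ} (hf : ContDiff ℝ n f) :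
    ContDiff ℝ n (fun y : ℝ => f (y + 1)) := hf.comp (contDiff_id.add contDiff_const)

lemma iteratedDeriv_shift_sub {n : ℕ} {f : ℝ → ℂ} (hf : ContDiff ℝ (n : ℕ∞) f) :
    iteratedDeriv n (fun y => f (y + 1) - f y)
      = fun y => iteratedDeriv n f (y + 1) - iteratedDeriv n f y := by
  rw [my_iteratedDeriv_sub (shift_contDiff hf) hf, iteratedDeriv_comp_add_const n f 1]

lemma diff_bound : ∀ m : ℕ, ∃ C : ℝ, 0 ≤ C ∧ ∀ f : ℝ → ℂ,
    ContDiff ℝ ((m + 1 : ℕ) : ℕ∞) f → ∀ x : ℝ,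
    ‖iteratedDeriv m f x - fdiff m f x‖
      ≤ C * ∫ u in (0:ℝ)..((m + 1 : ℕ) : ℝ), ‖iteratedDeriv (m + 1) f (x + u)‖ := by
  intro m
  induction m with
  | zero =>
    exact ⟨0, le_rfl, fun f _ x => by simp [fdiff]⟩
  | succ m ih =>
    obtain ⟨C, hC0, IH⟩ := ih
    refine ⟨1 + C * (m + 1), by positivity, fun f hf x => ?_⟩
    -- notation
    set φ := iteratedDeriv (m + 1) f with hφ
    set Ψ := iteratedDeriv (m + 2) f with hΨ
    set W : ℝ → ℝ := fun v => ‖Ψ (x + v)‖ with hWdef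
    have hΨc : Continuous Ψ := hf.continuous_iteratedDeriv (m+2) (by exact_mod_cast le_rfl)
    have hφc : Continuous φ := hf.continuous_iteratedDeriv (m+1) (by exact_mod_cast by omega)
    have hWc : Continuous W := (hΨc.comp (continuous_const.add continuous_id)).norm
    have hWi : ∀ a b : ℝ, IntervalIntegrable W volume a b := fun a b => hWc.intervalIntegrable a b
    set J : ℝ := ∫ u in (0:ℝ)..((m+2 : ℕ) : ℝ), W u with hJdef
    have hJ0 : 0 ≤ J := intervalIntegral.integral_nonneg (by positivity) (fun u _ => norm_nonneg _)
    have hsub : ∀ a b : ℝ, 0 ≤ a → a ≤ b → b ≤ ((m+2 : ℕ) : ℝ) →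
        (∫ u in a..b, W u) ≤ J := by
      intro a b ha hab hb
      refine intervalIntegral.integral_mono_interval ha hab hb ?_ (hWi _ _)
      filter_upwards with u using norm_nonneg _
    -- smoothness bookkeeping
    have hf1 : ContDiff ℝ ((m + 1 : ℕ) : ℕ∞) f := hf.of_le (by exact_mod_cast by omega)
    have hfm : ContDiff ℝ ((m : ℕ) : ℕ∞) f := hf.of_le (by exact_mod_cast by omega)
    set F : ℝ → ℂ := fun y => f (y + 1) - f y with hFdef
    have hF : ContDiff ℝ ((m + 1 : ℕ) : ℕ∞) F := (shift_contDiff hf1).sub hf1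
    -- identity: iteratedDeriv m F = ∫_0^1 φ (y+s) ds
    have idF : ∀ y, iteratedDeriv m F y = ∫ s in (0:ℝ)..1, φ (y + s) := by
      intro y
      rw [hFdef]
      rw [iteratedDeriv_shift_sub hfm]
      exact key_ftc hf1 y 1
    -- identity: iteratedDeriv (m+1) F y = ∫_0^1 Ψ (y+s) ds
    have idF1 : ∀ y, iteratedDeriv (m+1) F y = ∫ s in (0:ℝ)..1, Ψ (y + s) := by
      intro y
      rw [hFdef]
      rw [iteratedDeriv_shift_sub hf1]
      exact key_ftc hf y 1
    have hfd : fdiff (m+1) f = fdiff m F := rfl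
    have hφi : ∀ a b : ℝ, IntervalIntegrable (fun s => φ (x + s)) volume a b :=
      fun a b => (hφc.comp (continuous_const.add continuous_id)).intervalIntegrable a b
    -- bound on A
    have hA : ‖φ x - iteratedDeriv m F x‖ ≤ J := by
      rw [idF]
      have : φ x - ∫ s in (0:ℝ)..1, φ (x + s)
          = ∫ s in (0:ℝ)..1, (φ x - φ (x + s)) := by
        rw [intervalIntegral.integral_sub (intervalIntegrable_const) (hφi 0 1)]
        simp
      rw [this]
      calc ‖∫ s in (0:ℝ)..1, (φ x - φ (x + s))‖
          ≤ ∫ s in (0:ℝ)..1, ‖φ x - φ (x + s)‖ :=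
            intervalIntegral.norm_integral_le_integral_norm zero_le_one
        _ ≤ ∫ s in (0:ℝ)..1, J := by
            refine intervalIntegral.integral_mono_on zero_le_one ?_
              (intervalIntegrable_const) ?_
            · exact ((continuous_const.sub (hφc.comp (continuous_const.add continuous_id))).norm).intervalIntegrable 0 1
            · intro s hs
              have : φ (x + s) - φ x = ∫ u in (0:ℝ)..s, Ψ (x + u) := key_ftc hf x s
              rw [norm_sub_rev, this]
              calc ‖∫ u in (0:ℝ)..s, Ψ (x + u)‖ ≤ ∫ u in (0:ℝ)..s, ‖Ψ (x + u)‖ :=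
                    intervalIntegral.norm_integral_le_integral_norm hs.1
                _ ≤ J := hsub 0 s le_rfl hs.1 (le_trans hs.2 (by push_cast; linarith))
        _ = J := by simp
    -- bound on B
    have hB : ‖iteratedDeriv m F x - fdiff m F x‖ ≤ C * ((m+1) * J) := by
      have h1 := IH F hF x
      refine le_trans h1 ?_
      have h2 : (∫ u in (0:ℝ)..((m + 1 : ℕ) : ℝ), ‖iteratedDeriv (m + 1) F (x + u)‖)
          ≤ (m+1) * J := by
        calc (∫ u in (0:ℝ)..((m + 1 : ℕ) : ℝ), ‖iteratedDeriv (m + 1) F (x + u)‖)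
            ≤ ∫ u in (0:ℝ)..((m + 1 : ℕ) : ℝ), J := by
              refine intervalIntegral.integral_mono_on (by positivity) ?_
                (intervalIntegrable_const) ?_
              · have : Continuous (iteratedDeriv (m+1) F) :=
                  hF.continuous_iteratedDeriv (m+1) (by exact_mod_cast le_rfl)
                exact ((this.comp (continuous_const.add continuous_id)).norm).intervalIntegrable _ _
              · intro u hu
                rw [idF1]
                calc ‖∫ s in (0:ℝ)..1, Ψ (x + u + s)‖
                    ≤ ∫ s in (0:ℝ)..1, ‖Ψ (x + u + s)‖ :=
                      intervalIntegral.norm_integral_le_integral_norm zero_le_one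
                  _ = ∫ s in (u+0)..(u+1), W s := by
                      have heq : ∀ s : ℝ, ‖Ψ (x + u + s)‖ = W (u + s) := by
                        intro s; simp only [hWdef, add_assoc]
                      simp_rw [heq]
                      rw [intervalIntegral.integral_comp_add_left (fun s => W s) u]
                  _ ≤ J := hsub (u+0) (u+1) (by simpa using hu.1) (by linarith) (by
                      have := hu.2; push_cast at this ⊢; linarith)
          _ = (m+1) * J := by
              rw [intervalIntegral.integral_const]
              push_cast
              simp [smul_eq_mul]
      exact mul_le_mul_of_nonneg_left h2 hC0
    -- combine
    show ‖φ x - fdiff m F x‖ ≤ _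
    have tri : ‖φ x - fdiff m F x‖
        ≤ ‖φ x - iteratedDeriv m F x‖ + ‖iteratedDeriv m F x - fdiff m F x‖ := by
      have := norm_add_le (φ x - iteratedDeriv m F x) (iteratedDeriv m F x - fdiff m F x)
      simpa using this
    calc ‖φ x - fdiff m F x‖
        ≤ ‖φ x - iteratedDeriv m F x‖ + ‖iteratedDeriv m F x - fdiff m F x‖ := tri
      _ ≤ J + C * ((m+1) * J) := add_le_add hA hB
      _ = (1 + C * (↑m + 1)) * J := by ring

lemma conv_memLp {p : ENNReal} (hp : 1 ≤ p) {F : ℝ → ℂ} (hFc : Continuous F)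
    (hFp : MemLp F p volume) {T : ℝ} (hT : 0 ≤ T) :
    MemLp (fun x => ∫ u in (0:ℝ)..T, ‖F (x + u)‖) p volume := by
  set G : ℝ → ℝ := fun v => ‖F v‖ with hGdef
  have hGc : Continuous G := hFc.norm
  set g : ℝ → ℝ := fun x => ∫ u in (0:ℝ)..T, G (x + u) with hgdef
  have hg_eq : ∀ x, g x = (∫ v in (0:ℝ)..(x+T), G v) - ∫ v in (0:ℝ)..x, G v := by
    intro x
    rw [hgdef]
    simp only
    rw [intervalIntegral.integral_comp_add_left G x, add_zero,
      intervalIntegral.integral_interval_sub_left (hGc.intervalIntegrable _ _)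
        (hGc.intervalIntegrable _ _)]
  have hgc : Continuous g := by
    have hprim : Continuous (fun t : ℝ => ∫ v in (0:ℝ)..t, G v) :=
      intervalIntegral.continuous_primitive (fun a b => hGc.intervalIntegrable a b) 0
    have : g = fun x => (∫ v in (0:ℝ)..(x+T), G v) - ∫ v in (0:ℝ)..x, G v := funext hg_eq
    rw [this]
    exact (hprim.comp (continuous_id.add continuous_const)).sub hprim
  have hg0 : ∀ x, 0 ≤ g x := fun x =>
    intervalIntegral.integral_nonneg hT (fun u _ => norm_nonneg _)
  by_cases hptop : p = ⊤
  · -- bounded case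
    subst hptop
    have hE : eLpNormEssSup F volume < ⊤ := by
      have := hFp.2
      rwa [eLpNorm_exponent_top] at this
    set c : ℝ := (eLpNormEssSup F volume).toReal with hc
    have hae : ∀ᵐ y ∂(volume : Measure ℝ), G y ≤ c := by
      filter_upwards [ae_le_eLpNormEssSup (f := F) (μ := volume)] with y hy
      have := ENNReal.toReal_mono hE.ne hy
      simpa [hGdef] using this
    have hev : ∀ y, G y ≤ c := by
      by_contra hcon
      push_neg at hcon
      obtain ⟨y0, hy0⟩ := hcon
      have hopen : IsOpen {y : ℝ | c < G y} := isOpen_lt continuous_const hGc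
      have hpos : 0 < volume {y : ℝ | c < G y} := hopen.measure_pos volume ⟨y0, hy0⟩
      have hzero : volume {y : ℝ | c < G y} = 0 := by
        have := hae
        rw [MeasureTheory.ae_iff] at this
        simpa [not_le] using this
      rw [hzero] at hpos
      exact lt_irrefl _ hpos
    refine memLp_top_of_bound hgc.aestronglyMeasurable (T * c) (ae_of_all _ fun x => ?_)
    rw [Real.norm_of_nonneg (hg0 x)]
    calc g x ≤ ∫ u in (0:ℝ)..T, c := by
          refine intervalIntegral.integral_mono_on hT ?_ intervalIntegrable_const
            (fun u _ => hev (x + u))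
          exact (hGc.comp (continuous_const.add continuous_id)).intervalIntegrable _ _
      _ = T * c := by simp [smul_eq_mul]
  · -- p < ∞
    have hp0 : p ≠ 0 := (lt_of_lt_of_le zero_lt_one hp).ne'
    set q : ℝ := p.toReal with hq
    have hq1 : 1 ≤ q := by
      have := ENNReal.toReal_mono hptop hp
      simpa using this
    have hq0 : (0:ℝ) < q := lt_of_lt_of_le zero_lt_one hq1
    set eG : ℝ → ℝ≥0∞ := fun y => (‖F y‖₊ : ℝ≥0∞) with heGdef
    have heG_meas : Measurable eG := hFc.measurable.enorm
    have step1 : ∀ x, (‖g x‖₊ : ℝ≥0∞) = ∫⁻ u in Set.Ioc 0 T, eG (x + u) := by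
      intro x
      have hint : IntegrableOn (fun u => G (x + u)) (Set.Ioc 0 T) volume :=
        ((hGc.comp (continuous_const.add continuous_id)).integrableOn_Ioc)
      rw [← enorm_eq_nnnorm, ← ofReal_norm, Real.norm_of_nonneg (hg0 x), hgdef]
      simp only
      rw [intervalIntegral.integral_of_le hT,
        MeasureTheory.ofReal_integral_eq_lintegral_ofReal hint
          (ae_of_all _ fun u => norm_nonneg _)]
      refine lintegral_congr fun u => ?_
      simp only [heGdef, hGdef, ← enorm_eq_nnnorm, ← ofReal_norm]
    -- pointwise Hölder
    have step2 : ∀ f : ℝ → ℝ≥0∞, Measurable f →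
        (∫⁻ u in Set.Ioc 0 T, f u) ^ q
          ≤ (ENNReal.ofReal T) ^ (q - 1) * ∫⁻ u in Set.Ioc 0 T, (f u) ^ q := by
      intro f hf
      by_cases hqe : q = 1
      · simp [hqe]
      · have hq1' : 1 < q := lt_of_le_of_ne hq1 (Ne.symm hqe)
        have hpq := Real.HolderConjugate.conjExponent hq1'
        set r : ℝ := q.conjExponent with hr
        have hvol : volume (Set.Ioc (0:ℝ) T) = ENNReal.ofReal T := by
          simp [Real.volume_Ioc]
        have hH := ENNReal.lintegral_mul_le_Lp_mul_Lq (volume.restrict (Set.Ioc 0 T)) hpq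
          hf.aemeasurable aemeasurable_const (g := fun _ => 1)
        simp only [Pi.mul_apply, mul_one, one_mul, ENNReal.one_rpow, lintegral_const,
          Measure.restrict_apply, MeasurableSet.univ, Set.univ_inter, hvol] at hH
        have h2 := ENNReal.rpow_le_rpow hH (le_of_lt hq0)
        rw [ENNReal.mul_rpow_of_nonneg _ _ (le_of_lt hq0)] at h2
        rw [← ENNReal.rpow_mul, ← ENNReal.rpow_mul] at h2
        rw [one_div_mul_cancel (ne_of_gt hq0), ENNReal.rpow_one] at h2
        have hrval : 1 / r * q = q - 1 := by
          have h1r : 1 / q + 1 / r = 1 := by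
            have := hpq.inv_add_inv_eq_one
            simpa [one_div] using this
          have : 1 / r = 1 - 1 / q := by linarith
          rw [this]
          field_simp
        rw [hrval] at h2
        calc (∫⁻ u in Set.Ioc 0 T, f u) ^ q
            ≤ (∫⁻ u in Set.Ioc 0 T, (f u) ^ q) * (ENNReal.ofReal T) ^ (q - 1) := h2
          _ = (ENNReal.ofReal T) ^ (q - 1) * ∫⁻ u in Set.Ioc 0 T, (f u) ^ q := mul_comm _ _
    -- put together
    refine ⟨hgc.aestronglyMeasurable, ?_⟩
    rw [eLpNorm_eq_lintegral_rpow_enorm_toReal hp0 hptop]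
    refine ENNReal.rpow_lt_top_of_nonneg (by positivity) ?_
    rw [← lt_top_iff_ne_top]
    have hI : (∫⁻ y, eG y ^ q) < ⊤ := by
      have h2 := hFp.2
      rw [eLpNorm_eq_lintegral_rpow_enorm_toReal hp0 hptop] at h2
      have hne : (∫⁻ y, eG y ^ q) ^ (1 / q) ≠ ⊤ := h2.ne
      have h3 : (∫⁻ y, eG y ^ q) = ((∫⁻ y, eG y ^ q) ^ (1 / q)) ^ q := by
        rw [← ENNReal.rpow_mul, one_div_mul_cancel (ne_of_gt hq0), ENNReal.rpow_one]
      rw [h3]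
      exact ENNReal.rpow_lt_top_of_nonneg (le_of_lt hq0) hne
    have hTfin : (ENNReal.ofReal T) ^ (q - 1) ≠ ⊤ := by
      exact (ENNReal.rpow_lt_top_of_nonneg (by linarith) ENNReal.ofReal_ne_top).ne
    have hmeas2 : Measurable fun z : ℝ × ℝ => eG (z.1 + z.2) ^ q :=
      (heG_meas.comp measurable_add).pow_const _
    show (∫⁻ x, (‖g x‖₊ : ℝ≥0∞) ^ q) < ⊤
    calc (∫⁻ x, (‖g x‖₊ : ℝ≥0∞) ^ q)
        = ∫⁻ x, (∫⁻ u in Set.Ioc 0 T, eG (x + u)) ^ q := by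
          refine lintegral_congr fun x => ?_
          rw [step1]
      _ ≤ ∫⁻ x, (ENNReal.ofReal T) ^ (q - 1) * ∫⁻ u in Set.Ioc 0 T, eG (x + u) ^ q := by
          refine lintegral_mono fun x => ?_
          exact step2 _ (heG_meas.comp (measurable_const.add measurable_id))
      _ = (ENNReal.ofReal T) ^ (q - 1) * ∫⁻ x, ∫⁻ u in Set.Ioc 0 T, eG (x + u) ^ q := by
          rw [lintegral_const_mul' _ _ hTfin]
      _ = (ENNReal.ofReal T) ^ (q - 1) * ∫⁻ u in Set.Ioc 0 T, ∫⁻ x, eG (x + u) ^ q := by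
          congr 1
          exact lintegral_lintegral_swap hmeas2.aemeasurable
      _ = (ENNReal.ofReal T) ^ (q - 1) * ∫⁻ _u in Set.Ioc 0 T, (∫⁻ y, eG y ^ q) := by
          congr 1
          refine lintegral_congr fun u => ?_
          exact lintegral_add_right_eq_self (fun y => eG y ^ q) u
      _ = (ENNReal.ofReal T) ^ (q - 1) * ((∫⁻ y, eG y ^ q) * ENNReal.ofReal T) := by
          rw [lintegral_const, Measure.restrict_apply MeasurableSet.univ, Set.univ_inter,
            Real.volume_Ioc, sub_zero]
      _ < ⊤ := ENNReal.mul_lt_top hTfin.lt_top (ENNReal.mul_lt_top hI ENNReal.ofReal_lt_top)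

lemma step_memLp {p : ENNReal} (hp : 1 ≤ p) {k : ℕ} {f : ℝ → ℂ}
    (hf : ContDiff ℝ ((k + 1 : ℕ) : ℕ∞) f)
    (h0 : MemLp f p volume) (h1 : MemLp (iteratedDeriv (k + 1) f) p volume) :
    MemLp (iteratedDeriv k f) p volume := by
  obtain ⟨C, hC0, hC⟩ := diff_bound k
  have hΨc : Continuous (iteratedDeriv (k + 1) f) :=
    hf.continuous_iteratedDeriv (k + 1) (by exact_mod_cast le_rfl)
  have hconv : MemLp (fun x => ∫ u in (0:ℝ)..((k + 1 : ℕ) : ℝ),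
      ‖iteratedDeriv (k + 1) f (x + u)‖) p volume :=
    conv_memLp hp hΨc h1 (by positivity)
  have hg : MemLp (fun x => C * ∫ u in (0:ℝ)..((k + 1 : ℕ) : ℝ),
      ‖iteratedDeriv (k + 1) f (x + u)‖) p volume := hconv.const_mul C
  have hTmem : MemLp (fun x => iteratedDeriv k f x - fdiff k f x) p volume := by
    refine MemLp.of_le hg ?_ (ae_of_all _ fun x => ?_)
    · have hc1 : Continuous (iteratedDeriv k f) :=
        hf.continuous_iteratedDeriv k (by exact_mod_cast Nat.le_succ k)
      exact (hc1.sub (continuous_fdiff k f hf.continuous)).aestronglyMeasurable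
    · refine le_trans (hC f hf x) ?_
      rw [Real.norm_eq_abs]
      exact le_abs_self _
  have heq : iteratedDeriv k f
      = fun x => fdiff k f x + (iteratedDeriv k f x - fdiff k f x) := by
    funext x; ring
  rw [heq]
  exact (memLp_fdiff k f h0).add hTmem

lemma main_aux {p : ENNReal} (hp : 1 ≤ p) : ∀ (k : ℕ) (h : ℝ → ℂ),
    ContDiff ℝ (k : ℕ∞) h → MemLp h p volume → MemLp (iteratedDeriv k h) p volume →
    ∀ ℓ : ℕ, ℓ ≤ k → MemLp (iteratedDeriv ℓ h) p volume := by
  intro k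
  induction k with
  | zero =>
    intro h _ h0 _ ℓ hℓ
    interval_cases ℓ
    simpa using h0
  | succ k ih =>
    intro h hreg h0 hk1 ℓ hℓ
    rcases Nat.lt_or_ge ℓ (k + 1) with hlt | hge
    · have hk : MemLp (iteratedDeriv k h) p volume := step_memLp hp hreg h0 hk1
      exact ih h (hreg.of_le (by exact_mod_cast Nat.le_succ k)) h0 hk ℓ (by omega)
    · have hek : ℓ = k + 1 := le_antisymm hℓ hge
      subst hek
      exact hk1


/-- Landau–Kolmogorov / intermediate derivatives: for `1 ≤ p ≤ ∞`,
if `h ∈ C^k(ℝ)` with `h, h^{(k)} ∈ L^p(ℝ)`, then `h^{(ℓ)} ∈ L^p(ℝ)` for all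
`ℓ = 1, …, k-1`. -/
theorem intermediate_derivatives_Lp
    (p : ENNReal) (hp : 1 ≤ p) (k : ℕ) (h : ℝ → ℂ)
    (hreg : ContDiff ℝ (k : ℕ∞) h)
    (hLp : MemLp h p volume)
    (hkLp : MemLp (iteratedDeriv k h) p volume) :
    ∀ ℓ : ℕ, 1 ≤ ℓ → ℓ ≤ k - 1 → MemLp (iteratedDeriv ℓ h) p volume := by
  intro ℓ _ hℓ
  exact main_aux hp k h hreg hLp hkLp ℓ (by omega)
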